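/- arXiv:2003.00649 — 4 statements merged into one kernel-verified Lean document; each statement's English description precedes it below -/
import Mathlib

section
/- For every real number r > 0 there exists a constant c > 0 such that for all δ with 0 ≤ δ ≤ 1, one has 2r − 2·arsinh(2·sinh(r/2)·√(1 + (sinh(r/2)/cosh δ)²)) ≥ c·δ². -/
open Real

lemma sinh_le_mul_cosh {u : ℝ} (hu : 0 ≤ u) : Real.sinh u ≤ u * Real.cosh u := by
  have hd : ∀ x : ℝ, HasDerivAt (fun x : ℝ => x * Real.cosh x - Real.sinh x)
      (x * Real.sinh x) x := by
    intro x
    have h := ((hasDerivAt_id x).mul (Real.hasDerivAt_cosh x)).sub (Real.hasDerivAt_sinh x)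
    refine h.congr_deriv ?_
    simp only [id_eq, one_mul]
    ring
  have h : MonotoneOn (fun x : ℝ => x * Real.cosh x - Real.sinh x) (Set.Ici 0) := by
    apply monotoneOn_of_deriv_nonneg (convex_Ici 0)
    · exact ((continuous_id.mul Real.continuous_cosh).sub Real.continuous_sinh).continuousOn
    · exact fun x _ => (hd x).differentiableAt.differentiableWithinAt
    · intro x hx
      rw [interior_Ici, Set.mem_Ioi] at hx
      rw [(hd x).deriv]
      exact mul_nonneg hx.le (Real.sinh_pos_iff.2 hx).le
  have := h (Set.self_mem_Ici) hu hu
  simp at this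
  linarith

set_option maxHeartbeats 1000000 in
/-- For every `r > 0` there is a constant `c > 0` such that for all `0 ≤ δ ≤ 1`,
`2r - 2 arsinh (2 sinh (r/2) √(1 + (sinh (r/2)/cosh δ)²)) ≥ c δ²`. -/
theorem stmt4 (r : ℝ) (hr : 0 < r) :
    ∃ c : ℝ, 0 < c ∧ ∀ δ : ℝ, 0 ≤ δ → δ ≤ 1 →
      c * δ ^ 2 ≤ 2 * r - 2 * Real.arsinh
        (2 * Real.sinh (r / 2) * Real.sqrt (1 + (Real.sinh (r / 2) / Real.cosh δ) ^ 2)) := by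
  set s := Real.sinh (r / 2) with hs_def
  have hs : 0 < s := Real.sinh_pos_iff.2 (by linarith)
  set K := Real.sqrt (1 + s ^ 2) with hK_def
  have hK2 : K ^ 2 = 1 + s ^ 2 := Real.sq_sqrt (by positivity)
  have hK : 0 < K := Real.sqrt_pos.2 (by positivity)
  have hKcosh : K = Real.cosh (r / 2) := by
    rw [hK_def, hs_def]
    rw [show (1 : ℝ) + Real.sinh (r/2) ^ 2 = Real.cosh (r/2) ^ 2 by
      have := Real.cosh_sq (r/2); linarith]
    exact Real.sqrt_sq (Real.cosh_pos (r/2)).le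
  have hsinhr : Real.sinh r = 2 * s * K := by
    rw [hKcosh, hs_def, show r = 2 * (r/2) by ring, Real.sinh_two_mul]
    ring
  have hcosh1 : (0:ℝ) < Real.cosh 1 := Real.cosh_pos 1
  have hcoshr : (0:ℝ) < Real.cosh r := Real.cosh_pos r
  refine ⟨s ^ 3 / (K * Real.cosh 1 ^ 2 * Real.cosh r), by positivity, ?_⟩
  intro δ hδ0 hδ1
  set c := s ^ 3 / (K * Real.cosh 1 ^ 2 * Real.cosh r) with hc_def
  have hc : 0 < c := by positivity
  set C := Real.cosh δ with hC_def
  have hC1 : 1 ≤ C := Real.one_le_cosh δ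
  have hC0 : 0 < C := lt_of_lt_of_le one_pos hC1
  have hCle : C ≤ Real.cosh 1 := by
    rw [hC_def]
    rw [Real.cosh_le_cosh]
    rw [abs_of_nonneg hδ0, abs_one]; exact hδ1
  have hsinhδ : δ ≤ Real.sinh δ := Real.self_le_sinh_iff.2 hδ0
  set B := Real.sqrt (1 + (s / C) ^ 2) with hB_def
  have hB2 : B ^ 2 = 1 + (s / C) ^ 2 := Real.sq_sqrt (by positivity)
  have hB : 0 < B := Real.sqrt_pos.2 (by positivity)
  have hBK : B ≤ K := by
    apply Real.sqrt_le_sqrt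
    have : (s / C) ^ 2 ≤ s ^ 2 := by
      rw [div_pow]
      rw [div_le_iff₀ (by positivity)]
      nlinarith [mul_le_mul hC1 hC1 zero_le_one hC0.le, sq_nonneg s]
    linarith
  -- Step 1: sinh r - A ≥ s^3 δ^2 / (K * cosh 1 ^ 2)
  have hsinh2 : Real.sinh δ ^ 2 = C ^ 2 - 1 := by
    have := Real.cosh_sq δ; rw [← hC_def] at this; linarith
  clear_value s K C B
  have key : s ^ 3 * δ ^ 2 / (K * Real.cosh 1 ^ 2) ≤ Real.sinh r - 2 * s * B := by
    rw [hsinhr]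
    have hB2' : B ^ 2 * C ^ 2 = C ^ 2 + s ^ 2 := by
      rw [hB2]; field_simp
    have hdiff : K - B = (s ^ 2 - (s / C) ^ 2) / (K + B) := by
      rw [eq_div_iff (by positivity)]
      have : (K - B) * (K + B) = K ^ 2 - B ^ 2 := by ring
      rw [this, hK2, hB2, div_pow]
      field_simp
      ring
    have hnum : s ^ 2 * δ ^ 2 / Real.cosh 1 ^ 2 ≤ s ^ 2 - (s / C) ^ 2 := by
      have h1 : s ^ 2 - (s / C) ^ 2 = s ^ 2 * (C ^ 2 - 1) / C ^ 2 := by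
        field_simp
      rw [h1, ← hsinh2]
      rw [div_le_div_iff₀ (by positivity) (by positivity)]
      have hδs : δ ^ 2 ≤ Real.sinh δ ^ 2 := by nlinarith
      have hCc : C ^ 2 ≤ Real.cosh 1 ^ 2 := by nlinarith
      have hmain : δ ^ 2 * C ^ 2 ≤ Real.sinh δ ^ 2 * Real.cosh 1 ^ 2 :=
        mul_le_mul hδs hCc (by positivity) (sq_nonneg _)
      nlinarith [mul_le_mul_of_nonneg_left hmain (sq_nonneg s)]
    have hKB : K + B ≤ 2 * K := by linarith
    have : s ^ 2 * δ ^ 2 / Real.cosh 1 ^ 2 / (2 * K) ≤ (s ^ 2 - (s / C) ^ 2) / (K + B) := by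
      apply div_le_div₀ (by nlinarith) hnum (by positivity) hKB
    have h2 : 2 * s * K - 2 * s * B = 2 * s * (K - B) := by ring
    rw [h2, hdiff]
    calc s ^ 3 * δ ^ 2 / (K * Real.cosh 1 ^ 2)
        = 2 * s * (s ^ 2 * δ ^ 2 / Real.cosh 1 ^ 2 / (2 * K)) := by field_simp
      _ ≤ 2 * s * ((s ^ 2 - (s / C) ^ 2) / (K + B)) := by
          apply mul_le_mul_of_nonneg_left this (by positivity)
  -- Step 2: conclude via sinh(r - u) ≥ sinh r - u cosh r
  set u := c * δ ^ 2 / 2 with hu_def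
  have hu0 : 0 ≤ u := by positivity
  have hucosh : u * Real.cosh r = s ^ 3 * δ ^ 2 / (K * Real.cosh 1 ^ 2) / 2 := by
    rw [hu_def, hc_def]; field_simp
  have hA : 2 * s * B ≤ Real.sinh r - u * Real.cosh r := by
    rw [hucosh]
    have hE0 : 0 ≤ s ^ 3 * δ ^ 2 / (K * Real.cosh 1 ^ 2) := by positivity
    linarith
  have hAnn : 0 ≤ 2 * s * B := by positivity
  have hsinhru : Real.sinh r - u * Real.cosh r ≤ Real.sinh (r - u) := by
    rw [Real.sinh_sub]
    have h1 : Real.sinh u ≤ u * Real.cosh u := sinh_le_mul_cosh hu0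
    have h2 : 1 ≤ Real.cosh u := Real.one_le_cosh u
    have h3 : 0 ≤ Real.sinh r - u * Real.cosh r := le_trans hAnn hA
    nlinarith [Real.cosh_pos r]
  have harsinh : Real.arsinh (2 * s * B) ≤ r - u := by
    have : 2 * s * B ≤ Real.sinh (r - u) := le_trans hA hsinhru
    calc Real.arsinh (2 * s * B) ≤ Real.arsinh (Real.sinh (r - u)) :=
          Real.arsinh_le_arsinh.2 this
      _ = r - u := Real.arsinh_sinh _
  rw [hu_def] at harsinh
  linarith
end

section
/- For every real number δ with 0 ≤ δ ≤ 1, one has 1 − 2·arsinh(2·sinh(1/4)·√(1 + (sinh(1/4)/cosh δ)²)) ≥ δ²/100. -/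
set_option maxHeartbeats 1000000

open Real

/-- Numeric lower bound for `exp (1/4)`. -/
lemma aux_exp_quarter : (1.284 : ℝ) ≤ Real.exp (1 / 4) := by
  have h4 : Real.exp (1 / 4) ^ 4 = Real.exp 1 := by
    rw [← Real.exp_nat_mul]
    norm_num
  have he : (2.7182818283 : ℝ) < Real.exp 1 := Real.exp_one_gt_d9
  have hpos : (0 : ℝ) < Real.exp (1 / 4) := Real.exp_pos _
  have : (1.284 : ℝ) ^ 4 ≤ Real.exp (1 / 4) ^ 4 := by
    rw [h4]; nlinarith
  exact le_of_pow_le_pow_left₀ (by norm_num) hpos.le this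

/-- Numeric lower bound for `sinh (1/4)`. -/
lemma aux_sinh_quarter : (0.2525 : ℝ) ≤ Real.sinh (1 / 4) := by
  have h1 := aux_exp_quarter
  have h2 : Real.exp (-(1 / 4)) ≤ 0.779 := by
    rw [Real.exp_neg]
    rw [inv_le_comm₀ (Real.exp_pos _) (by norm_num)]
    calc (0.779 : ℝ)⁻¹ ≤ 1.284 := by norm_num
    _ ≤ Real.exp (1 / 4) := h1
  rw [Real.sinh_eq]
  linarith

/-- Numeric bounds on `exp (-1)`. -/
lemma aux_exp_neg_one : (0.3678 : ℝ) ≤ Real.exp (-1) ∧ Real.exp (-1) ≤ 0.368 := by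
  have h1 : (2.7182818283 : ℝ) < Real.exp 1 := Real.exp_one_gt_d9
  have h2 : Real.exp 1 < 2.7182818286 := Real.exp_one_lt_d9
  have hpos : (0 : ℝ) < Real.exp 1 := Real.exp_pos _
  constructor
  · rw [Real.exp_neg, le_inv_comm₀ (by norm_num) hpos]
    calc Real.exp 1 ≤ 2.7182818286 := h2.le
    _ ≤ (0.3678 : ℝ)⁻¹ := by norm_num
  · rw [Real.exp_neg, inv_le_comm₀ hpos (by norm_num)]
    calc (0.368 : ℝ)⁻¹ ≤ 2.7182818283 := by norm_num
    _ ≤ Real.exp 1 := h1.le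

/-- Numeric upper bound for `sinh 1`. -/
lemma aux_sinh_one : Real.sinh 1 ≤ 1.1753 := by
  have h2 : Real.exp 1 < 2.7182818286 := Real.exp_one_lt_d9
  have h3 := aux_exp_neg_one.1
  rw [Real.sinh_eq]
  linarith

/-- Numeric upper bound for `cosh 1`. -/
lemma aux_cosh_one : Real.cosh 1 ≤ 1.5432 := by
  have h2 : Real.exp 1 < 2.7182818286 := Real.exp_one_lt_d9
  have h3 := aux_exp_neg_one.2
  rw [Real.cosh_eq]
  linarith

/-- Mean-value style bound: `cosh 1 - cosh (1 - ε) ≤ sinh 1 * ε` for `0 ≤ ε`. -/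
lemma aux_cosh_diff (ε : ℝ) (hε : 0 ≤ ε) :
    Real.cosh 1 - Real.cosh (1 - ε) ≤ Real.sinh 1 * ε := by
  have e1 : Real.exp (1 - ε) = Real.exp 1 * Real.exp (-ε) := by
    rw [← Real.exp_add]; ring_nf
  have e2 : Real.exp (-(1 - ε)) = Real.exp (-1) * Real.exp ε := by
    rw [← Real.exp_add]; ring_nf
  have b1 : 1 - ε ≤ Real.exp (-ε) := by
    have := Real.add_one_le_exp (-ε); linarith
  have b2 : 1 + ε ≤ Real.exp ε := by
    have := Real.add_one_le_exp ε; linarith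
  have p1 : (0 : ℝ) < Real.exp 1 := Real.exp_pos _
  have p2 : (0 : ℝ) < Real.exp (-1) := Real.exp_pos _
  rw [Real.cosh_eq, Real.cosh_eq, Real.sinh_eq, e1, e2]
  nlinarith

/-- Abstract polynomial step. -/
lemma aux_num (c2 b c1 s2 sd2 : ℝ) (hc2 : 0 ≤ c2)
    (hchain : c2 * (c1 - b) ≤ 8 * s2 ^ 2 * sd2)
    (hid : c1 - 1 = 8 * s2 * (1 + s2))
    (hcd : c2 = sd2 + 1) :
    0 ≤ c2 * (b - 1) / 2 - 4 * s2 * c2 - 4 * s2 ^ 2 := by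
  have h9 : c2 * (c1 - 1) = c2 * (8 * s2 * (1 + s2)) := by rw [hid]
  have h10 : 8 * s2 ^ 2 * sd2 = 8 * s2 ^ 2 * c2 - 8 * s2 ^ 2 := by
    have : sd2 = c2 - 1 := by linarith
    rw [this]; ring
  nlinarith [hchain, h9, h10]

/-- For every real `δ` with `0 ≤ δ ≤ 1`,
`1 - 2 arsinh (2 sinh (1/4) √(1 + (sinh (1/4)/cosh δ)²)) ≥ δ²/100`. -/
theorem stmt5 (δ : ℝ) (h0 : 0 ≤ δ) (h1 : δ ≤ 1) :
    δ ^ 2 / 100 ≤ 1 - 2 * Real.arsinh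
      (2 * Real.sinh (1 / 4) * Real.sqrt (1 + (Real.sinh (1 / 4) / Real.cosh δ) ^ 2)) := by
  have hδ2 : δ ^ 2 ≤ 1 := by nlinarith [h0, h1]
  set s := Real.sinh (1 / 4) with hs
  have hs0 : 0 < s := Real.sinh_pos_iff.mpr (by norm_num)
  have hc0 : 0 < Real.cosh δ := Real.cosh_pos δ
  have hsl : (0.2525 : ℝ) ≤ s := aux_sinh_quarter
  have hsinh1 : Real.sinh 1 ≤ 1.1753 := aux_sinh_one
  have hsinh1n : 0 ≤ Real.sinh 1 := Real.sinh_nonneg_iff.mpr (by norm_num)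
  have hcosh1 : Real.cosh 1 ≤ 1.5432 := aux_cosh_one
  have hcosh1l : 1 ≤ Real.cosh 1 := Real.one_le_cosh 1
  -- numeric: sinh 1 * cosh 1 ^ 2 ≤ 800 * s ^ 4
  have hs4 : (0.2525 : ℝ) ^ 4 ≤ s ^ 4 := pow_le_pow_left₀ (by norm_num) hsl 4
  have hnum : Real.sinh 1 * Real.cosh 1 ^ 2 ≤ 800 * s ^ 4 := by nlinarith
  -- cosh δ ≤ cosh 1
  have hcmono : Real.cosh δ ≤ Real.cosh 1 := by
    rw [Real.cosh_le_cosh]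
    rw [abs_of_nonneg h0, abs_of_nonneg (by norm_num : (0:ℝ) ≤ 1)]
    exact h1
  -- δ ≤ sinh δ
  have hsd : δ ≤ Real.sinh δ := Real.self_le_sinh_iff.mpr h0
  have hsd2 : δ ^ 2 ≤ Real.sinh δ ^ 2 := by nlinarith
  -- identity: (cosh 1 - 1)/2 = 4 s^2 (1 + s^2)
  have hid : Real.cosh 1 - 1 = 8 * s ^ 2 * (1 + s ^ 2) := by
    have h2m : Real.cosh (2 * (1/2 : ℝ)) = Real.cosh (1/2) ^ 2 + Real.sinh (1/2) ^ 2 :=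
      Real.cosh_two_mul _
    have hcs : Real.cosh (1/2 : ℝ) ^ 2 = Real.sinh (1/2) ^ 2 + 1 := Real.cosh_sq _
    have hsm : Real.sinh (2 * (1/4 : ℝ)) = 2 * Real.sinh (1/4) * Real.cosh (1/4) :=
      Real.sinh_two_mul _
    have hcs4 : Real.cosh (1/4 : ℝ) ^ 2 = Real.sinh (1/4) ^ 2 + 1 := Real.cosh_sq _
    have e1 : (2 : ℝ) * (1/2) = 1 := by norm_num
    have e2 : (2 : ℝ) * (1/4) = 1/2 := by norm_num
    rw [e1] at h2m
    rw [e2] at hsm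
    rw [← hs] at hsm hcs4
    have h5 : Real.sinh (1/2 : ℝ) ^ 2 = 4 * s ^ 2 * (s ^ 2 + 1) := by
      rw [hsm, mul_pow, mul_pow, hcs4]; ring
    linarith
  -- c² = sinh δ² + 1
  have hcd : Real.cosh δ ^ 2 = Real.sinh δ ^ 2 + 1 := Real.cosh_sq δ
  -- key coshd bound
  have hD := aux_cosh_diff (δ ^ 2 / 100) (by positivity)
  -- chain: cosh δ ^2 * (cosh 1 - cosh (1 - δ²/100)) ≤ 8 s⁴ sinh δ ²
  have hchain : Real.cosh δ ^ 2 * (Real.cosh 1 - Real.cosh (1 - δ ^ 2 / 100))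
      ≤ 8 * s ^ 4 * Real.sinh δ ^ 2 := by
    have t1 : Real.cosh δ ^ 2 * (Real.cosh 1 - Real.cosh (1 - δ ^ 2 / 100))
        ≤ Real.cosh δ ^ 2 * (Real.sinh 1 * (δ ^ 2 / 100)) := by
      apply mul_le_mul_of_nonneg_left hD (by positivity)
    have t2 : Real.cosh δ ^ 2 * (Real.sinh 1 * (δ ^ 2 / 100))
        ≤ Real.cosh 1 ^ 2 * (Real.sinh 1 * (δ ^ 2 / 100)) := by
      apply mul_le_mul_of_nonneg_right _ (by positivity)
      nlinarith
    have t3 : Real.cosh 1 ^ 2 * (Real.sinh 1 * (δ ^ 2 / 100))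
        ≤ 800 * s ^ 4 * (δ ^ 2 / 100) := by
      have : 0 ≤ δ ^ 2 / 100 := by positivity
      nlinarith
    have t4 : 800 * s ^ 4 * (δ ^ 2 / 100) ≤ 8 * s ^ 4 * Real.sinh δ ^ 2 := by
      nlinarith [pow_pos hs0 4]
    linarith
  -- main squared inequality
  have hmain' : 4 * s ^ 2 * (1 + (s / Real.cosh δ) ^ 2)
      ≤ (Real.cosh (1 - δ ^ 2 / 100) - 1) / 2 := by
    have hnumer := aux_num (Real.cosh δ ^ 2) (Real.cosh (1 - δ ^ 2 / 100)) (Real.cosh 1)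
      (s ^ 2) (Real.sinh δ ^ 2) (by positivity)
      (by rw [show ((s ^ 2) ^ 2 : ℝ) = s ^ 4 by ring]; exact hchain) (by linarith [hid]) hcd
    rw [← sub_nonneg]
    have hrw : (Real.cosh (1 - δ ^ 2 / 100) - 1) / 2 - 4 * s ^ 2 * (1 + (s / Real.cosh δ) ^ 2)
        = (Real.cosh δ ^ 2 * (Real.cosh (1 - δ ^ 2 / 100) - 1) / 2 - 4 * (s ^ 2) * Real.cosh δ ^ 2
            - 4 * (s ^ 2) ^ 2) / Real.cosh δ ^ 2 := by
      field_simp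
      ring
    rw [hrw]
    exact div_nonneg hnumer (by positivity)
  -- sinh of the target value
  set u : ℝ := 1 / 2 - δ ^ 2 / 200 with hu
  have hu0 : (0 : ℝ) < u := by rw [hu]; linarith
  have hsu : 0 ≤ Real.sinh u := Real.sinh_nonneg_iff.mpr hu0.le
  have hsinhu2 : Real.sinh u ^ 2 = (Real.cosh (1 - δ ^ 2 / 100) - 1) / 2 := by
    have h2m : Real.cosh (2 * u) = Real.cosh u ^ 2 + Real.sinh u ^ 2 := Real.cosh_two_mul u
    have hcs : Real.cosh u ^ 2 = Real.sinh u ^ 2 + 1 := Real.cosh_sq u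
    have e1 : 2 * u = 1 - δ ^ 2 / 100 := by rw [hu]; ring
    rw [e1] at h2m
    linarith
  -- the key comparison
  have hA : (0 : ℝ) ≤ 1 + (s / Real.cosh δ) ^ 2 := by positivity
  have hsqrt : Real.sqrt (1 + (s / Real.cosh δ) ^ 2) ^ 2 = 1 + (s / Real.cosh δ) ^ 2 :=
    Real.sq_sqrt hA
  have hX0 : 0 ≤ 2 * s * Real.sqrt (1 + (s / Real.cosh δ) ^ 2) := by positivity
  have hkey : 2 * s * Real.sqrt (1 + (s / Real.cosh δ) ^ 2) ≤ Real.sinh u := by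
    have hXsq : (2 * s * Real.sqrt (1 + (s / Real.cosh δ) ^ 2)) ^ 2
        = 4 * s ^ 2 * (1 + (s / Real.cosh δ) ^ 2) := by
      rw [mul_pow, mul_pow, hsqrt]; ring
    have hle : (2 * s * Real.sqrt (1 + (s / Real.cosh δ) ^ 2)) ^ 2 ≤ Real.sinh u ^ 2 := by
      rw [hXsq, hsinhu2]; exact hmain'
    exact le_of_pow_le_pow_left₀ (by norm_num) hsu hle
  -- conclude via arsinh monotonicity
  have harsinh : Real.arsinh (2 * s * Real.sqrt (1 + (s / Real.cosh δ) ^ 2)) ≤ u := by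
    calc Real.arsinh (2 * s * Real.sqrt (1 + (s / Real.cosh δ) ^ 2))
        ≤ Real.arsinh (Real.sinh u) := Real.arsinh_le_arsinh.mpr hkey
    _ = u := Real.arsinh_sinh u
  rw [hu] at harsinh
  linarith
end

section
/- Fix r > 0 and for δ > 0 set d(δ) := 2·arsinh(2·sinh(r/2)·√(1 + (sinh(r/2)/cosh δ)²)). Then the quotient (2r − d(δ))/δ² tends, as δ tends to 0 from the right, to the positive limit 2·sinh(r/2)³ / (cosh(r/2)·cosh(r)). -/
open Real Filter Set

/-- Fix `r > 0` and for `δ > 0` set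
`d δ := 2 arsinh (2 sinh (r/2) √(1 + (sinh (r/2)/cosh δ)²))`.
Then `(2r - d δ)/δ²` tends, as `δ → 0⁺`, to the positive limit
`2 sinh (r/2)³ / (cosh (r/2) · cosh r)`. -/
theorem stmt6 (r : ℝ) (hr : 0 < r) :
    Filter.Tendsto
      (fun δ : ℝ =>
        (2 * r - 2 * Real.arsinh
            (2 * Real.sinh (r / 2) *
              Real.sqrt (1 + (Real.sinh (r / 2) / Real.cosh δ) ^ 2))) / δ ^ 2)
      (nhdsWithin 0 (Set.Ioi 0))
      (nhds (2 * Real.sinh (r / 2) ^ 3 / (Real.cosh (r / 2) * Real.cosh r))) ∧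
    0 < 2 * Real.sinh (r / 2) ^ 3 / (Real.cosh (r / 2) * Real.cosh r) := by
  have hs : 0 < Real.sinh (r / 2) := Real.sinh_pos_iff.2 (by linarith)
  have hc : 0 < Real.cosh (r / 2) := Real.cosh_pos _
  have hcr : 0 < Real.cosh r := Real.cosh_pos _
  set s := Real.sinh (r / 2) with hs_def
  set c := Real.cosh (r / 2) with hc_def
  have hsqc : Real.sqrt (1 + s ^ 2) = c := by
    rw [show (1 : ℝ) + s ^ 2 = c ^ 2 by rw [hc_def, Real.cosh_sq]; ring]
    exact Real.sqrt_sq hc.le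
  have hsinhr : 2 * s * c = Real.sinh r := by
    rw [hs_def, hc_def, ← Real.sinh_two_mul]; ring_nf
  have hsqcr : Real.sqrt (1 + (2 * s * c) ^ 2) = Real.cosh r := by
    rw [hsinhr, show (1 : ℝ) + Real.sinh r ^ 2 = Real.cosh r ^ 2 by rw [Real.cosh_sq]; ring]
    exact Real.sqrt_sq hcr.le
  refine ⟨?_, by positivity⟩
  -- the function of u = cosh δ
  set h : ℝ → ℝ := fun u => 2 * r - 2 * Real.arsinh (2 * s * Real.sqrt (1 + (s / u) ^ 2))
    with hh_def
  -- derivative of h at 1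
  have hinner : HasDerivAt (fun u : ℝ => 1 + (s / u) ^ 2) (-2 * s ^ 2) 1 := by
    have h1 : HasDerivAt (fun u : ℝ => u⁻¹) (-1 : ℝ) 1 := by
      have := hasDerivAt_inv (one_ne_zero (α := ℝ))
      convert this using 1 ; rfl ; norm_num
    have h2 : HasDerivAt (fun u : ℝ => s * u⁻¹) (s * -1) 1 := h1.const_mul s
    have h3 := h2.pow 2
    have h4 := h3.const_add 1
    convert h4 using 1
    rfl
    rfl
    rfl
    norm_num
    ring
  have hF : HasDerivAt (fun u : ℝ => 2 * s * Real.sqrt (1 + (s / u) ^ 2))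
      (-2 * s ^ 3 / c) 1 := by
    have hne : (1 : ℝ) + (s / 1) ^ 2 ≠ 0 := by positivity
    have h5 := (Real.hasDerivAt_sqrt hne).comp 1 hinner
    have h6 := h5.const_mul (2 * s)
    convert h6 using 1
    rfl
    rfl
    rfl
    simp only [div_one] at *
    rw [hsqc]
    field_simp
  have hD : HasDerivAt h (4 * s ^ 3 / (c * Real.cosh r)) 1 := by
    have h7 := (Real.hasDerivAt_arsinh (2 * s * Real.sqrt (1 + (s / 1) ^ 2))).comp 1 hF
    have h8 := (h7.const_mul 2).const_sub (2 * r)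
    convert h8 using 1
    rfl
    rfl
    rfl
    simp only [div_one] at *
    rw [hsqc, hsqcr]
    field_simp
    ring
  have h1 : h 1 = 0 := by
    simp only [hh_def, div_one, hsqc, hsinhr, Real.arsinh_sinh]
    ring
  -- slope limit
  have hslope : Tendsto (fun u => h u / (u - 1)) (nhdsWithin 1 {(1 : ℝ)}ᶜ)
      (nhds (4 * s ^ 3 / (c * Real.cosh r))) := by
    have := hasDerivAt_iff_tendsto_slope.1 hD
    refine this.congr fun u => ?_
    simp [slope_def_field, h1, div_eq_div_iff]
  -- cosh tends to 1 within the punctured nbhd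
  have hcosh : Tendsto (fun δ : ℝ => Real.cosh δ) (nhdsWithin 0 (Set.Ioi 0))
      (nhdsWithin 1 {(1 : ℝ)}ᶜ) := by
    apply tendsto_nhdsWithin_of_tendsto_nhds_of_eventually_within
    · have := Real.continuous_cosh.tendsto 0
      simpa using this.mono_left nhdsWithin_le_nhds
    · filter_upwards [self_mem_nhdsWithin] with δ hδ
      simp only [mem_compl_iff, mem_singleton_iff]
      exact ne_of_gt (Real.one_lt_cosh.2 (ne_of_gt hδ))
  have hA : Tendsto (fun δ : ℝ => h (Real.cosh δ) / (Real.cosh δ - 1))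
      (nhdsWithin 0 (Set.Ioi 0)) (nhds (4 * s ^ 3 / (c * Real.cosh r))) :=
    hslope.comp hcosh
  -- (cosh δ - 1)/δ² → 1/2
  have hsinhx : Tendsto (fun x : ℝ => Real.sinh x / x) (nhdsWithin 0 {(0 : ℝ)}ᶜ)
      (nhds 1) := by
    have := hasDerivAt_iff_tendsto_slope.1 (Real.hasDerivAt_sinh 0)
    simp only [Real.cosh_zero] at this
    refine this.congr fun x => ?_
    simp [slope_def_field]
  have hhalf : Tendsto (fun δ : ℝ => (Real.cosh δ - 1) / δ ^ 2)
      (nhdsWithin 0 (Set.Ioi 0)) (nhds (1 / 2)) := by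
    have hmap : Tendsto (fun δ : ℝ => δ / 2) (nhdsWithin 0 (Set.Ioi 0))
        (nhdsWithin 0 {(0 : ℝ)}ᶜ) := by
      apply tendsto_nhdsWithin_of_tendsto_nhds_of_eventually_within
      · have : Tendsto (fun δ : ℝ => δ / 2) (nhds (0:ℝ)) (nhds ((0:ℝ) / 2)) :=
          Filter.Tendsto.div_const tendsto_id 2
        simpa using this.mono_left nhdsWithin_le_nhds
      · filter_upwards [self_mem_nhdsWithin] with δ hδ
        have hδ' : (0:ℝ) < δ := hδ
        simp only [mem_compl_iff, mem_singleton_iff]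
        positivity
    have hcomp : Tendsto (fun δ : ℝ => (Real.sinh (δ / 2) / (δ / 2)) ^ 2 / 2)
        (nhdsWithin 0 (Set.Ioi 0)) (nhds (1 / 2)) := by
      have := ((hsinhx.comp hmap).pow 2).div_const 2
      simpa using this
    refine hcomp.congr' ?_
    filter_upwards [self_mem_nhdsWithin] with δ hδ
    have hδ0 : δ ≠ 0 := ne_of_gt hδ
    have hco : Real.cosh δ - 1 = 2 * Real.sinh (δ / 2) ^ 2 := by
      have h2 := Real.cosh_two_mul (δ / 2)
      rw [show 2 * (δ/2) = δ by ring] at h2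
      have h3 := Real.cosh_sq (δ / 2)
      linarith
    rw [hco]
    field_simp
  -- combine
  have hmul := hA.mul hhalf
  have hval : 4 * s ^ 3 / (c * Real.cosh r) * (1 / 2) = 2 * s ^ 3 / (c * Real.cosh r) := by
    ring
  rw [hval] at hmul
  refine hmul.congr' ?_
  filter_upwards [self_mem_nhdsWithin] with δ hδ
  have hne : Real.cosh δ - 1 ≠ 0 := by
    have := Real.one_lt_cosh.2 (ne_of_gt hδ)
    linarith
  have hδ0 : δ ≠ 0 := ne_of_gt hδ
  rw [hh_def]
  field_simp
end

section
/- There is a constant c ≥ 1/200 such that the following holds; in fact c = 1/200 works. For every angle θ with 0 < θ ≤ π/2, let u := 2·arsinh(sin θ · sinh(1/4)) and consider the three points x = exp(−u)·(cos θ + i·sin θ), p = cos θ + i·sin θ, and y = exp(u)·(cos θ + i·sin θ) of the hyperbolic upper half-plane. Then dist(p,x) = dist(p,y) = 1/2, and dist(x,y) ≤ 1 − (π/2 − θ)²/200. -/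
open Real

lemma sinh_upper' {x : ℝ} (h0 : 0 ≤ x) (h1 : x < 1) :
    Real.sinh x ≤ x * (2 - x) / (2 * (1 - x)) := by
  have hx : 0 < 1 - x := by linarith
  have h2 := Real.exp_bound_div_one_sub_of_interval h0 h1
  have h3 : 1 - x ≤ Real.exp (-x) := by
    have := Real.add_one_le_exp (-x); linarith
  rw [Real.sinh_eq]
  have key : Real.exp x - Real.exp (-x) ≤ 1 / (1 - x) - (1 - x) := by linarith
  have heq : 1 / (1 - x) - (1 - x) = x * (2 - x) / (1 - x) := by
    field_simp; ring
  rw [heq] at key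
  have heq2 : x * (2 - x) / (2 * (1 - x)) = x * (2 - x) / (1 - x) / 2 := by rw [mul_comm 2 (1-x), ← div_div]
  rw [heq2]; linarith

lemma dist_ray (s cθ : ℝ) (hs : 0 < s) (hc : cθ ^ 2 + s ^ 2 = 1) (a b : ℝ)
    (ha : 0 < a) (hb : 0 < b) (z w : UpperHalfPlane)
    (hz : (z : ℂ) = (a : ℝ) * (cθ + s * Complex.I))
    (hw : (w : ℂ) = (b : ℝ) * (cθ + s * Complex.I)) :
    dist z w = 2 * Real.arsinh (|a - b| / (2 * (s * Real.sqrt (a * b)))) := by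
  rw [UpperHalfPlane.dist_eq]
  have habs1 : ‖((cθ : ℂ) + (s : ℂ) * Complex.I)‖ = 1 := by
    rw [Complex.norm_add_mul_I, hc, Real.sqrt_one]
  have him_z : z.im = a * s := by
    rw [← UpperHalfPlane.coe_im, hz]; simp
  have him_w : w.im = b * s := by
    rw [← UpperHalfPlane.coe_im, hw]; simp
  have habs : dist (z : ℂ) (w : ℂ) = |a - b| := by
    rw [Complex.dist_eq, hz, hw]
    have h : (a : ℂ) * (cθ + s * Complex.I) - (b : ℂ) * (cθ + s * Complex.I) =
        ((a - b : ℝ) : ℂ) * (cθ + s * Complex.I) := by push_cast; ring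
    rw [h, norm_mul, habs1, mul_one, Complex.norm_real, Real.norm_eq_abs]
  have hsq : Real.sqrt (z.im * w.im) = s * Real.sqrt (a * b) := by
    rw [him_z, him_w]
    have : a * s * (b * s) = s ^ 2 * (a * b) := by ring
    rw [this, Real.sqrt_mul (by positivity), Real.sqrt_sq hs.le]
  rw [habs, hsq]

lemma sqrt_exp' (t : ℝ) : Real.sqrt (Real.exp t) = Real.exp (t / 2) :=
  (Real.exp_half t).symm


lemma hst_lem {t : ℝ} (h0 : 0 ≤ t) (hu : t ≤ 1 / 100) : Real.sinh t ≤ 51 / 50 * t := by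
  have h := sinh_upper' h0 (by linarith)
  have h2' : t * (2 - t) / (2 * (1 - t)) ≤ 51 / 50 * t := by
    rw [div_le_iff₀ (by linarith)]; nlinarith
  linarith

lemma hfact_lem {S C p : ℝ} (hS1 : 1 / 4 < S) (hS2 : S ≤ 7 / 24) (hC0 : 1 ≤ C)
    (hCu : C ≤ 25 / 24) (hp : 0 ≤ p) (hp2 : p ≤ 9.9225) :
    102 * (C * (1 + 2 * S ^ 2)) * p ≤ 160000 * S ^ 3 := by
  have m1 : C * (1 + 2 * S ^ 2) ≤ 25 / 24 * (337 / 288) := by nlinarith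
  have m3 : C * (1 + 2 * S ^ 2) * p ≤ 25 / 24 * (337 / 288) * 9.9225 :=
    mul_le_mul m1 hp2 hp (by norm_num)
  have m2 : (1 / 4 : ℝ) ^ 3 ≤ S ^ 3 := pow_le_pow_left₀ (by norm_num) hS1.le 3
  have expand : 102 * (C * (1 + 2 * S ^ 2)) * p = 102 * (C * (1 + 2 * S ^ 2) * p) := by ring
  rw [expand]
  norm_num at m3 ⊢
  linarith only [m3, m2]

lemma hsq_lem {S C sd τ : ℝ}
    (hkey : 102 / 25 * S * C * (1 + 2 * S ^ 2) * τ ≤ 4 * S ^ 4 * sd ^ 2) :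
    4 * S ^ 2 * C ^ 2 - 4 * S ^ 4 * sd ^ 2 ≤ (2 * S * C - (1 + 2 * S ^ 2) * (51 / 50 * τ)) ^ 2 := by
  nlinarith [hkey, sq_nonneg ((1 + 2 * S ^ 2) * (51 / 50 * τ))]

set_option maxHeartbeats 1000000 in
lemma key_ineq (θ : ℝ) (h1 : 0 < θ) (h2 : θ ≤ π / 2) :
    2 * Real.arsinh (Real.sinh (2 * Real.arsinh (Real.sin θ * Real.sinh (1 / 4)))
        / Real.sin θ) ≤ 1 - (1 / 200) * (π / 2 - θ) ^ 2 := by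
  set δ : ℝ := π / 2 - θ with hδdef
  have hπ : (3.1415 : ℝ) < π := by
    have := Real.pi_gt_d6; linarith
  have hπ' : π < 3.15 := Real.pi_lt_d2
  have hδ0 : 0 ≤ δ := by rw [hδdef]; linarith
  have hδ1 : δ < π / 2 := by rw [hδdef]; linarith
  have hs0 : 0 < Real.sin θ := Real.sin_pos_of_pos_of_lt_pi h1 (by linarith)
  set s : ℝ := Real.sin θ with hsdef
  set S : ℝ := Real.sinh (1 / 4) with hSdef
  set C : ℝ := Real.cosh (1 / 4) with hCdef
  have hS1 : (1 / 4 : ℝ) < S := Real.self_lt_sinh_iff.mpr (by norm_num)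
  have hS0 : (0 : ℝ) < S := by linarith
  have hS2 : S ≤ 7 / 24 := by
    have := sinh_upper' (x := 1 / 4) (by norm_num) (by norm_num)
    rw [← hSdef] at this; linarith [this]
  have hC2 : C ^ 2 = 1 + S ^ 2 := Real.cosh_sq' _
  have hC0 : 1 ≤ C := Real.one_le_cosh _
  have hCu : C ≤ 25 / 24 := by nlinarith
  have hb1 : 1 + 2 * S ^ 2 ≤ 337 / 288 := by nlinarith
  have hscos : s = Real.cos δ := by
    rw [hsdef, hδdef, Real.cos_pi_div_two_sub]
  have hsin2 : s ^ 2 = 1 - Real.sin δ ^ 2 := by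
    rw [hscos]; have := Real.sin_sq_add_cos_sq δ; linarith
  have hsinδ : 2 / π * δ ≤ Real.sin δ := Real.mul_le_sin hδ0 hδ1.le
  have hsinδ0 : 0 ≤ Real.sin δ := le_trans (by positivity) hsinδ
  set w : ℝ := Real.arsinh (s * S) with hwdef
  have hsw : Real.sinh w = s * S := Real.sinh_arsinh _
  have hcw0 : 0 < Real.cosh w := Real.cosh_pos _
  have hcw2 : Real.cosh w ^ 2 = 1 + s ^ 2 * S ^ 2 := by
    rw [Real.cosh_sq', hsw]; ring
  have harg : Real.sinh (2 * w) / s = 2 * S * Real.cosh w := by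
    rw [Real.sinh_two_mul, hsw]; field_simp
  rw [harg]
  set τ : ℝ := δ ^ 2 / 400 with hτdef
  have hδu : δ ≤ 1.575 := by linarith
  have hδsq : δ ^ 2 ≤ 2.480625 := by nlinarith
  have hτ0 : 0 ≤ τ := by positivity
  have hτu : τ ≤ 1 / 100 := by rw [hτdef]; linarith
  have hgoal2 : 1 - 1 / 200 * δ ^ 2 = 2 * (1 / 2 - τ) := by rw [hτdef]; ring
  rw [hgoal2]
  have hπ2 : π ^ 2 ≤ 9.9225 := by nlinarith
  have hπp : (0 : ℝ) < π := by linarith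
  have hSC : 1 / 2 ≤ 2 * S * C := by nlinarith
  set E : ℝ := (1 + 2 * S ^ 2) * (51 / 50 * τ) with hEdef
  have hE0 : 0 ≤ E := by rw [hEdef]; positivity
  have hEu : E ≤ 337 / 288 * (51 / 5000) := by
    rw [hEdef]
    have := mul_le_mul hb1 (show 51 / 50 * τ ≤ 51 / 5000 by linarith)
      (by positivity) (by norm_num)
    linarith
  have hmain : 2 * S * Real.cosh w ≤ Real.sinh (1 / 2 - τ) := by
    have hst : Real.sinh τ ≤ 51 / 50 * τ := hst_lem hτ0 hτu
    have hsh : Real.sinh (1 / 2) = 2 * S * C := by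
      rw [show (1 / 2 : ℝ) = 2 * (1 / 4) by norm_num, Real.sinh_two_mul]
    have hch : Real.cosh (1 / 2) = 1 + 2 * S ^ 2 := by
      rw [show (1 / 2 : ℝ) = 2 * (1 / 4) by norm_num, Real.cosh_two_mul, hC2]; ring
    have hB : 2 * S * C - E ≤ Real.sinh (1 / 2 - τ) := by
      rw [Real.sinh_sub, hsh, hch]
      have h1c : (1 : ℝ) ≤ Real.cosh τ := Real.one_le_cosh τ
      have t1 : (1 + 2 * S ^ 2) * Real.sinh τ ≤ E := by
        rw [hEdef]
        have : (0:ℝ) ≤ 1 + 2 * S ^ 2 := by positivity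
        exact mul_le_mul_of_nonneg_left hst this
      have t2 : 2 * S * C * 1 ≤ 2 * S * C * Real.cosh τ := by
        have : (0:ℝ) ≤ 2 * S * C := by positivity
        exact mul_le_mul_of_nonneg_left h1c this
      linarith only [t1, t2]
    have hB0 : 0 ≤ 2 * S * C - E := by
      have h' : 337 / 288 * (51 / 5000 : ℝ) ≤ 1 / 2 := by norm_num
      linarith only [h', hEu, hSC]
    have hsq : (2 * S * Real.cosh w) ^ 2 ≤ (2 * S * C - E) ^ 2 := by
      have hL : (2 * S * Real.cosh w) ^ 2 = 4 * S ^ 2 * C ^ 2 - 4 * S ^ 4 * Real.sin δ ^ 2 := by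
        have h' : (2 * S * Real.cosh w) ^ 2 = 4 * S ^ 2 * (Real.cosh w ^ 2) := by ring
        rw [h', hcw2, hsin2, hC2]; ring
      rw [hL, hEdef]
      have hkey : (102 / 25) * S * C * (1 + 2 * S ^ 2) * τ ≤ 4 * S ^ 4 * Real.sin δ ^ 2 := by
        have hsd2 : (2 / π * δ) ^ 2 ≤ Real.sin δ ^ 2 :=
          pow_le_pow_left₀ (by positivity) hsinδ 2
        have hfact : 102 * (C * (1 + 2 * S ^ 2)) * π ^ 2 ≤ 160000 * S ^ 3 :=
          hfact_lem hS1 hS2 hC0 hCu (by positivity) hπ2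
        have step := mul_le_mul_of_nonneg_right hfact
          (show (0:ℝ) ≤ S * δ ^ 2 / (10000 * π ^ 2) by positivity)
        have e1 : 102 * (C * (1 + 2 * S ^ 2)) * π ^ 2 * (S * δ ^ 2 / (10000 * π ^ 2)) =
            (102 / 25) * S * C * (1 + 2 * S ^ 2) * (δ ^ 2 / 400) := by
          field_simp; ring
        have e2 : 160000 * S ^ 3 * (S * δ ^ 2 / (10000 * π ^ 2)) =
            4 * S ^ 4 * ((2 / π * δ) ^ 2) := by
          field_simp; ring
        have e3 : 4 * S ^ 4 * ((2 / π * δ) ^ 2) ≤ 4 * S ^ 4 * Real.sin δ ^ 2 :=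
          mul_le_mul_of_nonneg_left hsd2 (by positivity)
        rw [e1, e2] at step
        rw [hτdef]
        linarith only [step, e3]
      exact hsq_lem hkey
    have hcwpos : 0 ≤ 2 * S * Real.cosh w := by positivity
    have := le_of_pow_le_pow_left₀ two_ne_zero hB0 hsq
    linarith only [this, hB]
  calc 2 * Real.arsinh (2 * S * Real.cosh w)
      ≤ 2 * Real.arsinh (Real.sinh (1 / 2 - τ)) := by
        have := Real.arsinh_le_arsinh.mpr hmain; linarith
    _ = 2 * (1 / 2 - τ) := by rw [Real.arsinh_sinh]

/-- There is a constant `c ≥ 1/200` (in fact `c = 1/200` works) such that for every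
`0 < θ ≤ π/2`, setting `u := 2 arsinh (sin θ · sinh (1/4))` and taking the three points
`x = exp (-u) (cos θ + i sin θ)`, `p = cos θ + i sin θ`, `y = exp u (cos θ + i sin θ)`
of the hyperbolic upper half-plane, one has `dist p x = dist p y = 1/2` and
`dist x y ≤ 1 - c (π/2 - θ)²`. -/
theorem stmt7 :
    ∃ c : ℝ, 1 / 200 ≤ c ∧
      ∀ θ : ℝ, 0 < θ → θ ≤ Real.pi / 2 →
        ∀ x p y : UpperHalfPlane,
          (x : ℂ) = (Real.exp (-(2 * Real.arsinh (Real.sin θ * Real.sinh (1 / 4)))) : ℝ) *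
              (Real.cos θ + Real.sin θ * Complex.I) →
          (p : ℂ) = Real.cos θ + Real.sin θ * Complex.I →
          (y : ℂ) = (Real.exp (2 * Real.arsinh (Real.sin θ * Real.sinh (1 / 4))) : ℝ) *
              (Real.cos θ + Real.sin θ * Complex.I) →
          dist p x = 1 / 2 ∧ dist p y = 1 / 2 ∧
          dist x y ≤ 1 - c * (Real.pi / 2 - θ) ^ 2 := by
  refine ⟨1 / 200, le_refl _, fun θ h1 h2 x p y hx hp hy => ?_⟩
  have hs0 : 0 < Real.sin θ := Real.sin_pos_of_pos_of_lt_pi h1 (by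
    have := Real.pi_gt_d6; linarith)
  set s : ℝ := Real.sin θ with hsdef
  set W : ℝ := Real.arsinh (s * Real.sinh (1 / 4)) with hWdef
  have hSh : 0 < Real.sinh (1 / 4) := by
    rw [← Real.sinh_zero]; exact Real.sinh_lt_sinh.mpr (by norm_num)
  have hW0 : 0 ≤ W := by
    rw [hWdef]; rw [Real.arsinh_nonneg_iff]; positivity
  have hsWh : Real.sinh W = s * Real.sinh (1 / 4) := Real.sinh_arsinh _
  have hc : (Real.cos θ) ^ 2 + s ^ 2 = 1 := by
    rw [hsdef]; exact Real.cos_sq_add_sin_sq θ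
  have hp' : (p : ℂ) = ((1 : ℝ) : ℂ) * (Real.cos θ + s * Complex.I) := by
    rw [hp]; push_cast; ring
  have hexp2 : Real.exp (-(2 * W)) = Real.exp (-W) * Real.exp (-W) := by
    rw [← Real.exp_add]; ring_nf
  have hexp2' : Real.exp (2 * W) = Real.exp W * Real.exp W := by
    rw [← Real.exp_add]; ring_nf
  have hWW : Real.exp W * Real.exp (-W) = 1 := by
    rw [← Real.exp_add]; simp
  have hsinhW : Real.sinh W = (Real.exp W - Real.exp (-W)) / 2 := Real.sinh_eq W
  have hexpW1 : Real.exp (-(2 * W)) ≤ 1 := Real.exp_le_one_iff.mpr (by linarith)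
  have hexpW1' : 1 ≤ Real.exp (2 * W) := Real.one_le_exp_iff.mpr (by linarith)
  -- dist p x
  have hdpx : dist p x = 1 / 2 := by
    have h := dist_ray s (Real.cos θ) hs0 hc 1 (Real.exp (-(2 * W)))
      one_pos (Real.exp_pos _) p x hp' (by rw [hx])
    rw [h, one_mul, ← Real.exp_half, show -(2 * W) / 2 = -W by ring,
        abs_of_nonneg (by linarith)]
    have harg : (1 - Real.exp (-(2 * W))) / (2 * (s * Real.exp (-W))) = Real.sinh (1 / 4) := by
      rw [div_eq_iff (by positivity)]
      have h4 : Real.sinh (1 / 4) = Real.sinh W / s := by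
        rw [hsWh]; field_simp
      rw [h4, hsinhW]
      have hrng : (Real.exp W - Real.exp (-W)) / 2 / s * (2 * (s * Real.exp (-W))) =
          Real.exp W * Real.exp (-W) - Real.exp (-W) * Real.exp (-W) := by
        field_simp
      rw [hrng, hWW, ← hexp2]
    rw [harg, Real.arsinh_sinh]; norm_num
  -- dist p y
  have hdpy : dist p y = 1 / 2 := by
    have h := dist_ray s (Real.cos θ) hs0 hc 1 (Real.exp (2 * W))
      one_pos (Real.exp_pos _) p y hp' (by rw [hy])
    rw [h, one_mul, ← Real.exp_half, show 2 * W / 2 = W by ring,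
        abs_of_nonpos (by linarith), neg_sub]
    have harg : (Real.exp (2 * W) - 1) / (2 * (s * Real.exp W)) = Real.sinh (1 / 4) := by
      rw [div_eq_iff (by positivity)]
      have h4 : Real.sinh (1 / 4) = Real.sinh W / s := by
        rw [hsWh]; field_simp
      rw [h4, hsinhW]
      have hrng : (Real.exp W - Real.exp (-W)) / 2 / s * (2 * (s * Real.exp W)) =
          Real.exp W * Real.exp W - Real.exp W * Real.exp (-W) := by
        field_simp
      rw [hrng, hWW, ← hexp2']
    rw [harg, Real.arsinh_sinh]; norm_num
  -- dist x y
  have hdxy : dist x y = 2 * Real.arsinh (Real.sinh (2 * W) / s) := by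
    have h := dist_ray s (Real.cos θ) hs0 hc (Real.exp (-(2 * W))) (Real.exp (2 * W))
      (Real.exp_pos _) (Real.exp_pos _) x y (by rw [hx]) (by rw [hy])
    rw [h]
    have hone : Real.exp (-(2 * W)) * Real.exp (2 * W) = 1 := by
      rw [← Real.exp_add]; simp
    rw [hone, Real.sqrt_one, mul_one, abs_of_nonpos (by linarith), neg_sub]
    congr 2
    rw [Real.sinh_eq]
    field_simp
  refine ⟨hdpx, hdpy, ?_⟩
  rw [hdxy]
  exact key_ineq θ h1 h2
end
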